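/- Let G be a finite group, let ℕ^G denote the set of all functions from G to ℕ, and let X be a set with a left action of the monoid M(ℕ^G) of injective self-maps of ℕ^G. Pulling back along the monoid homomorphism M(ℕ) → M(ℕ^G), u ↦ (α ↦ u ∘ α), gives a left action of M(ℕ) on X. If x in X is supported, with respect to the M(ℕ^G)-action, on a finite subset T of ℕ^G, then x is supported, with respect to the induced M(ℕ)-action, on the finite subset I(T) = ⋃_{α ∈ T} α(G) of ℕ. In particular, if every element of X is finitely supported over ℕ^G, then every element of X is finitely supported over ℕ. (This is the content of the proposition that the G-fixed ℳ-category F^G C of a tame ℳ-category C is again tame.) -/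

import Mathlib

open CategoryTheory

/-- The monoid of injective self-maps of `U`, under composition. -/
def Minj (U : Type*) : Submonoid (Function.End U) where
  carrier := {f | Function.Injective f}
  mul_mem' := fun hf hg => hf.comp hg
  one_mem' := Function.injective_id

instance (U : Type*) : FunLike (Minj U) U U where
  coe u := u.1
  coe_injective := fun _ _ h => Subtype.ext h

@[simp] lemma Minj.mul_apply {U : Type*} (u v : Minj U) (a : U) : (u * v) a = u (v a) := rfl

/-- `x` is supported on `A` if every injection fixing `A` elementwise fixes `x`. -/
def Supported {U : Type*} {X : Type*} [MulAction (Minj U) X] (A : Set U) (x : X) : Prop :=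
  ∀ u : Minj U, (∀ a ∈ A, u a = a) → u • x = x

/-- `x` is finitely supported if it is supported on some finite subset of `U`. -/
def FinSupported {U : Type*} {X : Type*} [MulAction (Minj U) X] (x : X) : Prop :=
  ∃ A : Finset U, Supported (A : Set U) x

/-- The support of `x`: the intersection of all finite subsets of `U` on which `x`
is supported. -/
def supp {U : Type*} {X : Type*} [MulAction (Minj U) X] (x : X) : Set U :=
  {i : U | ∀ A : Finset U, Supported (A : Set U) x → i ∈ A}

/-- Postcomposition `u ↦ (α ↦ u ∘ α)` as a monoid homomorphism `M(ℕ) →* M(ℕ^G)`. -/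
def postcompMinj (G : Type) : Minj ℕ →* Minj (G → ℕ) where
  toFun u := ⟨fun α => ⇑u ∘ α, fun _ _ h => funext fun g => u.2 (congrFun h g)⟩
  map_one' := rfl
  map_mul' _ _ := rfl

/-- If `x` is supported on a finite subset `T` of `ℕ^G` for the `M(ℕ^G)`-action, then for the
`M(ℕ)`-action obtained by pulling back along postcomposition, `x` is supported on the finite
subset `I(T) = ⋃_{α ∈ T} α(G)` of `ℕ`.  In particular, if every element of `X` is finitely
supported over `ℕ^G`, then every element is finitely supported over `ℕ`. -/
theorem stmt16 (G : Type) [Group G] [Fintype G] (X : Type*)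
    [MulAction (Minj (G → ℕ)) X] :
    (∀ (x : X) (T : Finset (G → ℕ)), Supported (T : Set (G → ℕ)) x →
      ∀ u : Minj ℕ, (∀ a ∈ T.biUnion (fun α => Finset.image α Finset.univ), u a = a) →
        postcompMinj G u • x = x) ∧
    ((∀ x : X, ∃ T : Finset (G → ℕ), Supported (T : Set (G → ℕ)) x) →
      ∀ x : X, ∃ F : Finset ℕ, ∀ u : Minj ℕ, (∀ a ∈ F, u a = a) → postcompMinj G u • x = x) := by
  have key : ∀ (x : X) (T : Finset (G → ℕ)), Supported (T : Set (G → ℕ)) x →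
      ∀ u : Minj ℕ, (∀ a ∈ T.biUnion (fun α => Finset.image α Finset.univ), u a = a) →
        postcompMinj G u • x = x := by
    intro x T hT u hu
    apply hT
    intro α hα
    have : ∀ g : G, u (α g) = α g := fun g =>
      hu (α g) (Finset.mem_biUnion.2 ⟨α, hα, Finset.mem_image.2 ⟨g, Finset.mem_univ g, rfl⟩⟩)
    exact funext this
  refine ⟨key, fun h x => ?_⟩
  obtain ⟨T, hT⟩ := h x
  exact ⟨T.biUnion (fun α => Finset.image α Finset.univ), key x T hT⟩
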